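/- For every positive integer i and every real x > 0 with x ≠ i, the function x ↦ i (log x − log i)/(x² − i²) is nonnegative, and ∫₀^∞ i (log x − log i)/(x² − i²) dx = ∫₀^∞ (log u)/(u² − 1) du = π²/4. In particular the integral is independent of i. -/

import Mathlib

open Real MeasureTheory Set

private lemma stmt4_exp_img : (fun t : ℝ => rexp (-t)) '' Ioi 0 = Ioo 0 1 := by
  ext y
  simp only [mem_image, mem_Ioi, mem_Ioo]
  constructor
  · rintro ⟨t, ht, rfl⟩
    exact ⟨exp_pos _, exp_lt_one_iff.mpr (by linarith)⟩
  · rintro ⟨h0, h1⟩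
    exact ⟨-Real.log y, by simpa using Real.log_neg h0 h1, by simp [Real.exp_log h0]⟩

private lemma stmt4_exp_deriv :
    ∀ x ∈ Ioi (0:ℝ), HasDerivWithinAt (fun t : ℝ => rexp (-t)) (-rexp (-x)) (Ioi 0) x := by
  intro x _
  simpa [Function.comp_def] using ((Real.hasDerivAt_exp (-x)).comp x (hasDerivAt_neg x)).hasDerivWithinAt

private lemma stmt4_exp_inj : InjOn (fun t : ℝ => rexp (-t)) (Ioi 0) :=
  (Real.exp_injective.comp neg_injective).injOn

private lemma stmt4_exp_simp (k : ℕ) : ∀ x ∈ Ioi (0:ℝ),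
    |(-rexp (-x))| • (rexp (-x) ^ k * (-Real.log (rexp (-x))))
      = x ^ (1:ℝ) * rexp (-(((k:ℝ)+1)) * x ^ (1:ℝ)) := by
  intro x _
  rw [abs_neg, abs_of_pos (exp_pos _), Real.log_exp, smul_eq_mul, Real.rpow_one,
    ← Real.exp_nat_mul]
  have h3 : rexp (-x) * (rexp (↑k * -x) * - -x) = rexp (-x) * rexp (↑k * -x) * x := by ring
  rw [h3, ← Real.exp_add]
  have h4 : -x + ↑k * -x = -(↑k + 1) * x := by ring
  rw [h4]
  ring

private lemma stmt4_int_aux (k : ℕ) :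
    ∫ u in Ioo (0:ℝ) 1, u ^ k * (-Real.log u) = 1 / ((k:ℝ) + 1) ^ 2 := by
  have h1 := integral_image_eq_integral_abs_deriv_smul measurableSet_Ioi stmt4_exp_deriv
      stmt4_exp_inj (fun u => u ^ k * (-Real.log u))
  rw [stmt4_exp_img] at h1
  rw [h1, setIntegral_congr_fun measurableSet_Ioi (stmt4_exp_simp k),
    integral_rpow_mul_exp_neg_mul_rpow one_pos (by norm_num) (by positivity)]
  have hk : (0:ℝ) < (k:ℝ) + 1 := by positivity
  rw [show ((1:ℝ)+1)/1 = 2 by norm_num, Real.Gamma_two,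
    show (-((1:ℝ)+1)/1) = ((-2 : ℤ) : ℝ) by norm_num, Real.rpow_intCast]
  rw [zpow_neg, ← one_div]
  norm_num

private lemma stmt4_intOn_aux (k : ℕ) :
    IntegrableOn (fun u : ℝ => u ^ k * (-Real.log u)) (Ioo (0:ℝ) 1) := by
  have h1 := integrableOn_image_iff_integrableOn_abs_deriv_smul measurableSet_Ioi
      stmt4_exp_deriv stmt4_exp_inj (fun u => u ^ k * (-Real.log u))
  rw [stmt4_exp_img] at h1
  rw [h1]
  exact ((integrableOn_rpow_mul_exp_neg_mul_rpow (by norm_num) one_pos (by positivity))).congr_fun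
    (fun x hx => (stmt4_exp_simp k x hx).symm) measurableSet_Ioi

private lemma stmt4_odd_hasSum :
    HasSum (fun n : ℕ => 1 / ((2 * n + 1 : ℕ) : ℝ) ^ 2) (π ^ 2 / 8) := by
  set f : ℕ → ℝ := fun n => 1 / (n:ℝ) ^ 2 with hf
  have h : HasSum f (π ^ 2 / 6) := hasSum_zeta_two
  have heven : HasSum (fun k : ℕ => f (2 * k)) (π ^ 2 / 24) := by
    have h4 := h.mul_left (1/4)
    have heq : (fun n : ℕ => (1/4 : ℝ) * f n) = fun k : ℕ => f (2 * k) := by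
      funext n
      simp only [hf]
      push_cast
      rw [div_mul_div_comm, mul_pow]
      norm_num
    rw [heq] at h4
    convert h4 using 1
    · rfl
    · ring
  have hodd_sum : Summable (fun k : ℕ => f (2 * k + 1)) :=
    h.summable.comp_injective (fun a b hab => by omega)
  have hcomb := heven.even_add_odd hodd_sum.hasSum
  have huniq := hcomb.unique h
  have hval : ∑' k : ℕ, f (2 * k + 1) = π ^ 2 / 8 := by linarith
  have := hval ▸ hodd_sum.hasSum
  convert this using 2 with n

private noncomputable def stmt4F : ℝ → ℝ := fun u => Real.log u / (u ^ 2 - 1)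

private lemma stmt4_j0 : ∫ u in Ioo (0:ℝ) 1, Real.log u / (u ^ 2 - 1) = π ^ 2 / 8 := by
  have hsum_int : ∀ n : ℕ, ∫ u in Ioo (0:ℝ) 1, u ^ (2*n) * (-Real.log u)
      = 1 / ((2 * n + 1 : ℕ) : ℝ) ^ 2 := by
    intro n
    rw [stmt4_int_aux (2*n)]
    push_cast
    ring_nf
  have hstep1 : ∀ u ∈ Ioo (0:ℝ) 1, Real.log u / (u ^ 2 - 1)
      = ∑' n : ℕ, u ^ (2*n) * (-Real.log u) := by
    intro u hu
    obtain ⟨h0, h1⟩ := hu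
    have hu2 : u ^ 2 < 1 := by nlinarith
    have hgeo := (hasSum_geometric_of_lt_one (by positivity) hu2).mul_right (-Real.log u)
    have heq : (fun n : ℕ => (u ^ 2) ^ n * (-Real.log u))
        = fun n : ℕ => u ^ (2*n) * (-Real.log u) := by
      funext n; rw [← pow_mul]
    rw [heq] at hgeo
    rw [hgeo.tsum_eq]
    have hne : u ^ 2 - 1 ≠ 0 := by nlinarith
    have hne' : 1 - u ^ 2 ≠ 0 := by nlinarith
    field_simp
    ring
  rw [setIntegral_congr_fun measurableSet_Ioo hstep1]
  rw [← integral_tsum_of_summable_integral_norm (fun n => stmt4_intOn_aux (2*n)) ?_]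
  · rw [tsum_congr (fun n => hsum_int n)]
    exact stmt4_odd_hasSum.tsum_eq
  · have : ∀ n : ℕ, ∫ u in Ioo (0:ℝ) 1, ‖u ^ (2*n) * (-Real.log u)‖
        = 1 / ((2 * n + 1 : ℕ) : ℝ) ^ 2 := by
      intro n
      rw [← hsum_int n]
      refine setIntegral_congr_fun measurableSet_Ioo (fun u hu => ?_)
      obtain ⟨h0, h1⟩ := hu
      have : (0:ℝ) ≤ u ^ (2*n) * (-Real.log u) := by
        have := Real.log_neg h0 h1
        have : (0:ℝ) ≤ -Real.log u := by linarith
        positivity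
      exact abs_of_nonneg this
    rw [show (fun n : ℕ => ∫ u in Ioo (0:ℝ) 1, ‖u ^ (2*n) * (-Real.log u)‖)
        = fun n : ℕ => 1 / ((2 * n + 1 : ℕ) : ℝ) ^ 2 from funext this]
    exact stmt4_odd_hasSum.summable

private lemma stmt4_inv_identity {x : ℝ} (hx : x ∈ Ioo (0:ℝ) 1) :
    |(-(x^2)⁻¹)| • stmt4F x⁻¹ = stmt4F x := by
  obtain ⟨h0, h1⟩ := hx
  have hx2 : (0:ℝ) < x ^ 2 := by positivity
  have hne : x ^ 2 - 1 ≠ 0 := by nlinarith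
  simp only [stmt4F, abs_neg, abs_inv, abs_of_pos hx2, smul_eq_mul, Real.log_inv, inv_pow]
  have hne1 : (1:ℝ) - x^2 ≠ 0 := by nlinarith
  have h2 : (x^2)⁻¹ - 1 = (1 - x^2)/(x^2) := by field_simp
  have hinvne : (x^2)⁻¹ - 1 ≠ 0 := by
    rw [h2]; exact div_ne_zero hne1 (by positivity)
  field_simp
  ring

private lemma stmt4_img_inv : (fun x : ℝ => x⁻¹) '' Ioo 0 1 = Ioi (1:ℝ) := by
  ext y
  simp only [mem_image, mem_Ioo, mem_Ioi]
  constructor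
  · rintro ⟨x, ⟨h0, h1⟩, rfl⟩
    exact (one_lt_inv_iff₀).mpr ⟨h0, h1⟩
  · rintro hy
    have hy0 : 0 < y := lt_trans one_pos hy
    exact ⟨y⁻¹, ⟨by positivity, inv_lt_one_of_one_lt₀ hy⟩, by simp⟩

private lemma stmt4_deriv_inv :
    ∀ x ∈ Ioo (0:ℝ) 1, HasDerivWithinAt (fun x : ℝ => x⁻¹) (-(x^2)⁻¹) (Ioo 0 1) x :=
  fun x hx => (hasDerivAt_inv (ne_of_gt hx.1)).hasDerivWithinAt

private lemma stmt4_inj_inv : InjOn (fun x : ℝ => x⁻¹) (Ioo (0:ℝ) 1) := inv_injective.injOn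

private lemma stmt4_int_Ioi1_eq :
    ∫ u in Ioi (1:ℝ), stmt4F u = ∫ u in Ioo (0:ℝ) 1, stmt4F u := by
  rw [← stmt4_img_inv, integral_image_eq_integral_abs_deriv_smul measurableSet_Ioo
    stmt4_deriv_inv stmt4_inj_inv]
  exact setIntegral_congr_fun measurableSet_Ioo (fun x hx => stmt4_inv_identity hx)

private lemma stmt4_intOn_f_Ioo : IntegrableOn stmt4F (Ioo (0:ℝ) 1) := by
  have hlog := stmt4_intOn_aux 0
  simp only [pow_zero, one_mul] at hlog
  have hbound : IntegrableOn (fun u : ℝ => (4/3 : ℝ) * (-Real.log u) + 2) (Ioo (0:ℝ) 1) :=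
    (hlog.const_mul _).add (integrableOn_const measure_Ioo_lt_top.ne)
  refine Integrable.mono' hbound ?_ ?_
  · apply Measurable.aestronglyMeasurable
    exact (Real.measurable_log.div ((measurable_id.pow_const 2).sub measurable_const))
  · rw [ae_restrict_iff' measurableSet_Ioo]
    filter_upwards with u hu
    obtain ⟨h0, h1⟩ := hu
    have hlogneg : Real.log u < 0 := Real.log_neg h0 h1
    set L : ℝ := -Real.log u with hL
    have hL0 : 0 ≤ L := by simp [hL]; linarith
    have hLle : L ≤ (1 - u) / u := by
      have := Real.log_le_sub_one_of_pos (show (0:ℝ) < u⁻¹ by positivity)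
      rw [Real.log_inv] at this
      rw [hL]
      have h5 : -Real.log u ≤ u⁻¹ - 1 := by linarith
      calc -Real.log u ≤ u⁻¹ - 1 := h5
        _ = (1 - u)/u := by field_simp
    have hne : u ^ 2 - 1 ≠ 0 := by nlinarith
    have habs : |stmt4F u| = L / (1 - u^2) := by
      rw [stmt4F]
      rw [abs_div, abs_of_neg hlogneg, abs_of_neg (by nlinarith : u^2 - 1 < 0)]
      rw [hL]
      ring_nf
    rw [Real.norm_eq_abs, habs]
    rw [div_le_iff₀ (by nlinarith : (0:ℝ) < 1 - u^2)]
    rcases le_or_gt u (1/2) with hc | hc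
    · have h34 : (3/4:ℝ) ≤ 1 - u^2 := by nlinarith
      nlinarith [mul_le_mul_of_nonneg_left h34 (show (0:ℝ) ≤ 4/3*L by linarith),
        mul_nonneg (show (0:ℝ) ≤ 2 by norm_num) (show (0:ℝ) ≤ 1 - u^2 by linarith)]
    · have h2 : L ≤ 2 * (1 - u) := by
        calc L ≤ (1-u)/u := hLle
          _ ≤ 2 * (1-u) := by rw [div_le_iff₀ h0]; nlinarith
      nlinarith [mul_nonneg (show (0:ℝ) ≤ 1 - u by linarith) h0.le,
        mul_nonneg hL0 (show (0:ℝ) ≤ 1 - u^2 by nlinarith)]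

private lemma stmt4_intOn_f_Ioi1 : IntegrableOn stmt4F (Ioi (1:ℝ)) := by
  rw [← stmt4_img_inv, integrableOn_image_iff_integrableOn_abs_deriv_smul measurableSet_Ioo
    stmt4_deriv_inv stmt4_inj_inv]
  exact stmt4_intOn_f_Ioo.congr_fun (fun x hx => (stmt4_inv_identity hx).symm) measurableSet_Ioo

private lemma stmt4_third : (∫ u in Ioi (0:ℝ), Real.log u / (u ^ 2 - 1)) = π ^ 2 / 4 := by
  have hsplit : (∫ u in Ioi (0:ℝ), stmt4F u)
      = (∫ u in Ioc (0:ℝ) 1, stmt4F u) + ∫ u in Ioi (1:ℝ), stmt4F u := by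
    rw [← setIntegral_union (Ioc_disjoint_Ioi le_rfl) measurableSet_Ioi
      (stmt4_intOn_f_Ioo.congr_set_ae Ioo_ae_eq_Ioc.symm) stmt4_intOn_f_Ioi1,
      Ioc_union_Ioi_eq_Ioi zero_le_one]
  have h1 : (∫ u in Ioc (0:ℝ) 1, stmt4F u) = π ^ 2 / 8 := by
    rw [integral_Ioc_eq_integral_Ioo]
    exact stmt4_j0
  have h2 : (∫ u in Ioi (1:ℝ), stmt4F u) = π ^ 2 / 8 := by
    rw [stmt4_int_Ioi1_eq]
    exact stmt4_j0
  show (∫ u in Ioi (0:ℝ), stmt4F u) = π ^ 2 / 4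
  rw [hsplit, h1, h2]
  ring

/-- For every positive integer `i`, the function `x ↦ i(log x - log i)/(x² - i²)` is
nonnegative on `(0,∞) \ {i}`, and `∫₀^∞ i(log x - log i)/(x² - i²) dx
= ∫₀^∞ (log u)/(u² - 1) du = π²/4`; in particular the integral is independent of `i`. -/
theorem stmt_4 (i : ℕ) (hi : 0 < i) :
    (∀ x : ℝ, 0 < x → x ≠ (i : ℝ) →
      0 ≤ (i : ℝ) * (Real.log x - Real.log i) / (x ^ 2 - (i : ℝ) ^ 2)) ∧
    (∫ x in Ioi (0 : ℝ), (i : ℝ) * (Real.log x - Real.log i) / (x ^ 2 - (i : ℝ) ^ 2)) =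
      (∫ u in Ioi (0 : ℝ), Real.log u / (u ^ 2 - 1)) ∧
    (∫ u in Ioi (0 : ℝ), Real.log u / (u ^ 2 - 1)) = π ^ 2 / 4 := by
  have hi' : (0:ℝ) < i := by exact_mod_cast hi
  refine ⟨?_, ?_, stmt4_third⟩
  · intro x hx hne
    rcases lt_or_gt_of_ne hne with h | h
    · apply div_nonneg_of_nonpos
      · have := Real.log_lt_log hx h
        nlinarith
      · nlinarith
    · apply div_nonneg
      · have := Real.log_lt_log hi' h
        nlinarith
      · nlinarith
  · set F : ℝ → ℝ := fun y => (i : ℝ) * (Real.log y - Real.log i) / (y ^ 2 - (i : ℝ) ^ 2) with hF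
    have h1 := integral_comp_mul_left_Ioi F 0 hi'
    rw [mul_zero] at h1
    have h2 : ∫ x in Ioi (0:ℝ), F x = (i:ℝ) • ∫ x in Ioi (0:ℝ), F ((i:ℝ) * x) := by
      rw [h1, smul_smul, mul_inv_cancel₀ (ne_of_gt hi'), one_smul]
    rw [h2, ← integral_smul]
    refine setIntegral_congr_fun measurableSet_Ioi (fun x hx => ?_)
    have hx0 : (0:ℝ) < x := hx
    have hlog : Real.log ((i:ℝ) * x) = Real.log i + Real.log x :=
      Real.log_mul (ne_of_gt hi') (ne_of_gt hx0)
    simp only [hF, smul_eq_mul]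
    rw [hlog]
    have hd : ((i:ℝ) * x) ^ 2 - (i:ℝ) ^ 2 = (i:ℝ)^2 * (x^2 - 1) := by ring
    rw [hd]
    rcases eq_or_ne (x^2 - 1) 0 with h | h
    · rw [h, mul_zero, div_zero, mul_zero, div_zero]
    · field_simp
      ring
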